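/- (Quadratic decay, part i) Let f : Θ → ℝ be C², θ₀ ∈ Θ, with f(θ₀) = 0 and f^[1](θ₀) = 0, where f^[1] = (∂_θ f)/√g and f^[2] = (∂_θ f^[1])/√g for a positive C¹ function g with associated Riemannian distance d. If |f^[2](θ)| ≤ 2δ for all θ in the closed Riemannian ball B(θ₀,r), then |f(θ)| ≤ δ·d(θ,θ₀)² for all θ ∈ B(θ₀,r). -/

import Mathlib

private lemma aux_nonneg (F F' : ℝ → ℝ) (a b : ℝ)
    (hd : ∀ t, HasDerivAt F (F' t) t)
    (hpos : ∀ t ∈ Set.Icc a b, 0 ≤ F' t) (h0 : F a = 0) :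
    ∀ t ∈ Set.Icc a b, 0 ≤ F t := by
  intro t ht
  have hab : a ≤ b := ht.1.trans ht.2
  have hmono : MonotoneOn F (Set.Icc a b) := by
    apply monotoneOn_of_deriv_nonneg (convex_Icc a b)
      (fun x _ => (hd x).continuousAt.continuousWithinAt)
      (fun x _ => (hd x).differentiableAt.differentiableWithinAt)
    intro x hx
    rw [(hd x).deriv]
    exact hpos x (interior_subset hx)
  have := hmono ⟨le_refl a, hab⟩ ht ht.1
  linarith [h0]

private lemma aux_nonpos (F F' : ℝ → ℝ) (a b : ℝ)
    (hd : ∀ t, HasDerivAt F (F' t) t)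
    (hpos : ∀ t ∈ Set.Icc a b, 0 ≤ F' t) (h0 : F b = 0) :
    ∀ t ∈ Set.Icc a b, F t ≤ 0 := by
  intro t ht
  have hab : a ≤ b := ht.1.trans ht.2
  have hmono : MonotoneOn F (Set.Icc a b) := by
    apply monotoneOn_of_deriv_nonneg (convex_Icc a b)
      (fun x _ => (hd x).continuousAt.continuousWithinAt)
      (fun x _ => (hd x).differentiableAt.differentiableWithinAt)
    intro x hx
    rw [(hd x).deriv]
    exact hpos x (interior_subset hx)
  have := hmono ht ⟨hab, le_refl b⟩ ht.2
  linarith [h0]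

/-- Quadratic decay (part i): if `f(θ₀) = 0`, `f¹(θ₀) = 0` and `|f²| ≤ 2δ` on the Riemannian
ball `B(θ₀,r)`, then `|f(θ)| ≤ δ d(θ,θ₀)²` on `B(θ₀,r)`, where `f¹ = f'/√g`,
`f² = (f¹)'/√g` and `d(θ,θ') = |G θ − G θ'|` with `G` a primitive of `√g`. -/
theorem quadratic_decay_i
    (g G : ℝ → ℝ)
    (hg_pos : ∀ θ, 0 < g θ) (hg : ContDiff ℝ 1 g)
    (hG : ∀ θ, HasDerivAt G (Real.sqrt (g θ)) θ)
    (f : ℝ → ℝ) (hf : ContDiff ℝ 2 f)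
    (θ₀ : ℝ) (r δ : ℝ) (hr : 0 < r) (hδ : 0 < δ)
    (hf0 : f θ₀ = 0)
    (hf1 : deriv f θ₀ / Real.sqrt (g θ₀) = 0)
    (hf2 : ∀ θ, |G θ - G θ₀| ≤ r →
      |deriv (fun t => deriv f t / Real.sqrt (g t)) θ / Real.sqrt (g θ)| ≤ 2 * δ) :
    ∀ θ, |G θ - G θ₀| ≤ r → |f θ| ≤ δ * |G θ - G θ₀| ^ 2 := by
  have hs_pos : ∀ t, 0 < Real.sqrt (g t) := fun t => Real.sqrt_pos.mpr (hg_pos t)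
  have hs_ne : ∀ t, Real.sqrt (g t) ≠ 0 := fun t => (hs_pos t).ne'
  have hdf : ContDiff ℝ 1 (deriv f) := by
    have h2 : ContDiff ℝ ((1 : ℕ) + 1) f := by exact_mod_cast hf
    exact (contDiff_succ_iff_deriv.mp h2).2.2
  have hs_diff : ∀ t, DifferentiableAt ℝ (fun t => Real.sqrt (g t)) t := fun t =>
    ((hg.differentiable one_ne_zero) t).sqrt (hg_pos t).ne'
  have hf1_diff : ∀ t, DifferentiableAt ℝ (fun t => deriv f t / Real.sqrt (g t)) t := fun t =>
    ((hdf.differentiable one_ne_zero) t).div (hs_diff t) (hs_ne t)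
  -- f¹ has derivative f² · √g
  have hf1_deriv : ∀ t, HasDerivAt (fun t => deriv f t / Real.sqrt (g t))
      ((deriv (fun t => deriv f t / Real.sqrt (g t)) t / Real.sqrt (g t)) * Real.sqrt (g t)) t := by
    intro t
    have := (hf1_diff t).hasDerivAt
    rwa [div_mul_cancel₀ _ (hs_ne t)]
  have hf_deriv : ∀ t, HasDerivAt f (deriv f t) t := fun t =>
    ((hf.differentiable (by norm_num)) t).hasDerivAt
  have hGmono : Monotone G :=
    (StrictMono.monotone (strictMono_of_deriv_pos (fun t => by
      rw [(hG t).deriv]; exact hs_pos t)))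
  intro θ hθ
  -- derivative facts for u and v
  have hu_deriv : ∀ t, HasDerivAt (fun t => 2*δ*(G t - G θ₀) - deriv f t / Real.sqrt (g t))
      ((2*δ - deriv (fun t => deriv f t / Real.sqrt (g t)) t / Real.sqrt (g t)) * Real.sqrt (g t)) t := by
    intro t
    have h1 := ((hG t).sub_const (G θ₀)).const_mul (2*δ)
    have := h1.sub (hf1_deriv t)
    refine this.congr_deriv ?_
    ring
  have hv_deriv : ∀ t, HasDerivAt (fun t => 2*δ*(G t - G θ₀) + deriv f t / Real.sqrt (g t))
      ((2*δ + deriv (fun t => deriv f t / Real.sqrt (g t)) t / Real.sqrt (g t)) * Real.sqrt (g t)) t := by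
    intro t
    have h1 := ((hG t).sub_const (G θ₀)).const_mul (2*δ)
    have := h1.add (hf1_deriv t)
    refine this.congr_deriv ?_
    ring
  have hw_deriv : ∀ t, HasDerivAt (fun t => δ*(G t - G θ₀)^2 - f t)
      ((2*δ*(G t - G θ₀) - deriv f t / Real.sqrt (g t)) * Real.sqrt (g t)) t := by
    intro t
    have h1 := ((((hG t).sub_const (G θ₀))).pow 2).const_mul δ
    have := h1.sub (hf_deriv t)
    refine this.congr_deriv ?_
    rw [sub_mul, div_mul_cancel₀ _ (hs_ne t)]
    ring
  have hw2_deriv : ∀ t, HasDerivAt (fun t => δ*(G t - G θ₀)^2 + f t)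
      ((2*δ*(G t - G θ₀) + deriv f t / Real.sqrt (g t)) * Real.sqrt (g t)) t := by
    intro t
    have h1 := ((((hG t).sub_const (G θ₀))).pow 2).const_mul δ
    have := h1.add (hf_deriv t)
    refine this.congr_deriv ?_
    rw [add_mul, div_mul_cancel₀ _ (hs_ne t)]
    ring
  rw [sq_abs]
  rcases le_total θ₀ θ with hcase | hcase
  · -- θ₀ ≤ θ
    have hIball : ∀ t ∈ Set.Icc θ₀ θ, |G t - G θ₀| ≤ r := by
      intro t ht
      rw [abs_of_nonneg (sub_nonneg.mpr (hGmono ht.1))]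
      calc G t - G θ₀ ≤ G θ - G θ₀ := by linarith [hGmono ht.2]
        _ ≤ |G θ - G θ₀| := le_abs_self _
        _ ≤ r := hθ
    have hu : ∀ t ∈ Set.Icc θ₀ θ, 0 ≤ 2*δ*(G t - G θ₀) - deriv f t / Real.sqrt (g t) := by
      apply aux_nonneg _ _ _ _ hu_deriv
      · intro t ht
        have := (abs_le.mp (hf2 t (hIball t ht))).2
        exact mul_nonneg (by linarith) (hs_pos t).le
      · simp [hf1]
    have hv : ∀ t ∈ Set.Icc θ₀ θ, 0 ≤ 2*δ*(G t - G θ₀) + deriv f t / Real.sqrt (g t) := by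
      apply aux_nonneg _ _ _ _ hv_deriv
      · intro t ht
        have := (abs_le.mp (hf2 t (hIball t ht))).1
        exact mul_nonneg (by linarith) (hs_pos t).le
      · simp [hf1]
    have hw : 0 ≤ δ*(G θ - G θ₀)^2 - f θ := by
      refine aux_nonneg _ _ θ₀ θ hw_deriv ?_ (by simp [hf0]) θ ⟨hcase, le_refl θ⟩
      exact fun t ht => mul_nonneg (hu t ht) (hs_pos t).le
    have hw2 : 0 ≤ δ*(G θ - G θ₀)^2 + f θ := by
      refine aux_nonneg _ _ θ₀ θ hw2_deriv ?_ (by simp [hf0]) θ ⟨hcase, le_refl θ⟩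
      exact fun t ht => mul_nonneg (hv t ht) (hs_pos t).le
    rw [abs_le]; constructor <;> linarith
  · -- θ ≤ θ₀
    have hIball : ∀ t ∈ Set.Icc θ θ₀, |G t - G θ₀| ≤ r := by
      intro t ht
      rw [abs_of_nonpos (sub_nonpos.mpr (hGmono ht.2))]
      calc -(G t - G θ₀) ≤ -(G θ - G θ₀) := by linarith [hGmono ht.1]
        _ ≤ |G θ - G θ₀| := neg_le_abs _
        _ ≤ r := hθ
    have hu : ∀ t ∈ Set.Icc θ θ₀, 2*δ*(G t - G θ₀) - deriv f t / Real.sqrt (g t) ≤ 0 := by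
      apply aux_nonpos _ _ _ _ hu_deriv
      · intro t ht
        have := (abs_le.mp (hf2 t (hIball t ht))).2
        exact mul_nonneg (by linarith) (hs_pos t).le
      · simp [hf1]
    have hv : ∀ t ∈ Set.Icc θ θ₀, 2*δ*(G t - G θ₀) + deriv f t / Real.sqrt (g t) ≤ 0 := by
      apply aux_nonpos _ _ _ _ hv_deriv
      · intro t ht
        have := (abs_le.mp (hf2 t (hIball t ht))).1
        exact mul_nonneg (by linarith) (hs_pos t).le
      · simp [hf1]
    -- now  -w = f - δ(...)²  has nonneg derivative  (f¹ - 2δ(G-Gθ₀))·√g  on [θ, θ₀]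
    have hw : f θ - δ*(G θ - G θ₀)^2 ≤ 0 := by
      refine aux_nonpos (fun t => f t - δ*(G t - G θ₀)^2)
        (fun t => (deriv f t / Real.sqrt (g t) - 2*δ*(G t - G θ₀)) * Real.sqrt (g t))
        θ θ₀ ?_ ?_ (by simp [hf0]) θ ⟨le_refl θ, hcase⟩
      · intro t
        have := (hw_deriv t).neg
        exact (this.congr_of_eventuallyEq (Filter.Eventually.of_forall fun s => by simp only [Pi.neg_apply]; ring)).congr_deriv (by ring)
      · intro t ht
        have := hu t ht
        exact mul_nonneg (by linarith) (hs_pos t).le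
    have hw2 : -f θ - δ*(G θ - G θ₀)^2 ≤ 0 := by
      refine aux_nonpos (fun t => -f t - δ*(G t - G θ₀)^2)
        (fun t => (-(deriv f t / Real.sqrt (g t)) - 2*δ*(G t - G θ₀)) * Real.sqrt (g t))
        θ θ₀ ?_ ?_ (by simp [hf0]) θ ⟨le_refl θ, hcase⟩
      · intro t
        have := (hw2_deriv t).neg
        exact (this.congr_of_eventuallyEq (Filter.Eventually.of_forall fun s => by simp only [Pi.neg_apply]; ring)).congr_deriv (by ring)
      · intro t ht
        have := hv t ht
        exact mul_nonneg (by linarith) (hs_pos t).le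
    rw [abs_le]; constructor <;> linarith
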